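/- Let ψ: ℝ^p → ℝ ∪ {+∞} be convex, μ > 0, and for z̄ ∈ ℝ^p let D(x) = A + (μ/2)‖x − z̄‖² + ψ(x) with minimizer x̂, and D'(x) = A' + (μ/2)‖x − z̄'‖² + ψ(x) with minimizer x̂'. Then D(x̂') − D(x̂) ≤ (μ/2)‖z̄ − z̄'‖². -/

import Mathlib

open scoped RealInnerProductSpace

variable {E : Type*} [NormedAddCommGroup E] [InnerProductSpace ℝ E]

lemma quad_interp (x y z : E) (t : ℝ) :
    ‖((1-t)•x + t•y) - z‖^2
      = (1-t)*‖x-z‖^2 + t*‖y-z‖^2 - t*(1-t)*‖x-y‖^2 := by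
  have h : ((1-t)•x + t•y) - z = (1-t)•(x-z) + t•(y-z) := by
    simp [smul_sub, sub_smul]; abel
  have h2 : x - y = (x-z) - (y-z) := by abel
  rw [h, h2]
  generalize x - z = a; generalize y - z = b
  have e1 : ‖(1-t)•a + t•b‖^2 = ⟪(1-t)•a + t•b, (1-t)•a + t•b⟫ :=
    (real_inner_self_eq_norm_sq _).symm
  rw [e1, norm_sub_sq_real]
  simp only [inner_add_add_self, real_inner_smul_left, real_inner_smul_right,
    real_inner_self_eq_norm_sq, norm_smul, Real.norm_eq_abs, mul_pow, sq_abs]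
  rw [real_inner_comm b a]
  ring

lemma cross_id (x y z z' : E) :
    ‖x - z‖^2 - ‖x - z'‖^2 - (‖y - z‖^2 - ‖y - z'‖^2)
      = 2 * ⟪x - y, z' - z⟫ := by
  simp only [norm_sub_sq_real, inner_sub_left, inner_sub_right,
    real_inner_self_eq_norm_sq]
  rw [real_inner_comm z' x, real_inner_comm z x, real_inner_comm z' y, real_inner_comm z y]
  ring

lemma strong_conv_min (ψ : E → EReal)
    (hψbot : ∀ x, ψ x ≠ ⊥)
    (hψconv : ∀ x y : E, ∀ a b : ℝ,
      0 ≤ a → 0 ≤ b → a + b = 1 →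
        ψ (a • x + b • y) ≤ (a : EReal) * ψ x + (b : EReal) * ψ y)
    (μ A' : ℝ) (hμ : 0 < μ) (zb' xhat xhat' : E)
    (hmin' : ∀ x, ((A' + μ / 2 * ‖xhat' - zb'‖ ^ 2 : ℝ) : EReal) + ψ xhat' ≤
      ((A' + μ / 2 * ‖x - zb'‖ ^ 2 : ℝ) : EReal) + ψ x)
    (s s' : ℝ) (hs : ψ xhat = (s : EReal)) (hs' : ψ xhat' = (s' : EReal)) :
    s' + μ/2*‖xhat'-zb'‖^2 + μ/2*‖xhat-xhat'‖^2 ≤ s + μ/2*‖xhat-zb'‖^2 := by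
  set a : ℝ := ‖xhat-zb'‖^2 with ha
  set a' : ℝ := ‖xhat'-zb'‖^2 with ha'
  set d : ℝ := ‖xhat-xhat'‖^2 with hd
  have key : ∀ t : ℝ, 0 < t → t < 1 →
      s' + μ/2*a' + μ/2*d ≤ s + μ/2*a + t*(μ/2*d) := by
    intro t ht0 ht1
    set xt : E := (1-t) • xhat' + t • xhat with hxt
    have hq : ‖xt - zb'‖^2 = (1-t)*a' + t*a - t*(1-t)*d := by
      rw [hxt, quad_interp]
      have : ‖xhat' - xhat‖ = ‖xhat - xhat'‖ := norm_sub_rev _ _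
      rw [this]
    have hconv := hψconv xhat' xhat (1-t) t (by linarith) (le_of_lt ht0) (by ring)
    rw [hs, hs'] at hconv
    have hconv' : ψ xt ≤ (((1-t)*s' + t*s : ℝ) : EReal) := by
      rw [hxt]
      calc ψ ((1-t) • xhat' + t • xhat) ≤ ((1-t) : EReal) * (s' : EReal) + (t : EReal) * (s : EReal) := hconv
        _ = (((1-t)*s' + t*s : ℝ) : EReal) := by
            norm_cast
    have hchain : ((A' + μ / 2 * a' : ℝ) : EReal) + (s' : EReal) ≤
        (((A' + μ / 2 * ‖xt - zb'‖^2) + ((1-t)*s' + t*s) : ℝ) : EReal) := by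
      rw [← hs']
      calc ((A' + μ / 2 * a' : ℝ) : EReal) + ψ xhat'
          ≤ ((A' + μ / 2 * ‖xt - zb'‖ ^ 2 : ℝ) : EReal) + ψ xt := hmin' xt
        _ ≤ ((A' + μ / 2 * ‖xt - zb'‖ ^ 2 : ℝ) : EReal) + (((1-t)*s' + t*s : ℝ) : EReal) := by
            exact add_le_add le_rfl hconv'
        _ = (((A' + μ / 2 * ‖xt - zb'‖^2) + ((1-t)*s' + t*s) : ℝ) : EReal) := by
            norm_cast
    rw [show ((A' + μ / 2 * a' : ℝ) : EReal) + (s' : EReal)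
        = (((A' + μ / 2 * a') + s' : ℝ) : EReal) from (EReal.coe_add _ _).symm,
      EReal.coe_le_coe_iff] at hchain
    rw [hq] at hchain
    nlinarith [hchain]
  refine le_of_forall_pos_le_add ?_
  intro ε hε
  have hd0 : 0 ≤ d := sq_nonneg _
  have hden : 0 < μ/2*d + 1 := by nlinarith
  set t : ℝ := min (1/2) (ε / (μ/2*d + 1)) with htdef
  have ht0 : 0 < t := lt_min (by norm_num) (div_pos hε hden)
  have ht1 : t < 1 := lt_of_le_of_lt (min_le_left _ _) (by norm_num)
  have hkey := key t ht0 ht1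
  have htle : t ≤ ε / (μ/2*d + 1) := min_le_right _ _
  have : t * (μ/2*d) ≤ ε := by
    have h1 : t * (μ/2*d + 1) ≤ ε := by
      calc t * (μ/2*d + 1) ≤ (ε / (μ/2*d + 1)) * (μ/2*d + 1) := by
            exact mul_le_mul_of_nonneg_right htle (le_of_lt hden)
        _ = ε := div_mul_cancel₀ _ (ne_of_gt hden)
    nlinarith
  linarith

theorem prox_center_shift_bound
    {pdim : ℕ} (ψ : EuclideanSpace ℝ (Fin pdim) → EReal)
    (hψbot : ∀ x, ψ x ≠ ⊥)
    (hψconv : ∀ x y : EuclideanSpace ℝ (Fin pdim), ∀ a b : ℝ,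
      0 ≤ a → 0 ≤ b → a + b = 1 →
        ψ (a • x + b • y) ≤ (a : EReal) * ψ x + (b : EReal) * ψ y)
    (μ A A' : ℝ) (hμ : 0 < μ)
    (zb zb' xhat xhat' : EuclideanSpace ℝ (Fin pdim))
    (hmin : ∀ x, ((A + μ / 2 * ‖xhat - zb‖ ^ 2 : ℝ) : EReal) + ψ xhat ≤
      ((A + μ / 2 * ‖x - zb‖ ^ 2 : ℝ) : EReal) + ψ x)
    (hmin' : ∀ x, ((A' + μ / 2 * ‖xhat' - zb'‖ ^ 2 : ℝ) : EReal) + ψ xhat' ≤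
      ((A' + μ / 2 * ‖x - zb'‖ ^ 2 : ℝ) : EReal) + ψ x) :
    (((A + μ / 2 * ‖xhat' - zb‖ ^ 2 : ℝ) : EReal) + ψ xhat') -
        (((A + μ / 2 * ‖xhat - zb‖ ^ 2 : ℝ) : EReal) + ψ xhat) ≤
      ((μ / 2 * ‖zb - zb'‖ ^ 2 : ℝ) : EReal) := by
  by_cases hT' : ψ xhat' = ⊤
  · by_cases hT : ψ xhat = ⊤
    · rw [hT, hT', EReal.add_top_of_ne_bot (EReal.coe_ne_bot _),
        EReal.add_top_of_ne_bot (EReal.coe_ne_bot _), EReal.sub_top]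
      exact bot_le
    · -- ψ xhat is a real; contradiction with hmin' at xhat
      obtain ⟨s, hs⟩ : ∃ s : ℝ, ψ xhat = (s : EReal) :=
        ⟨(ψ xhat).toReal, (EReal.coe_toReal hT (hψbot xhat)).symm⟩
      have h := hmin' xhat
      rw [hT', hs] at h
      rw [EReal.add_top_of_ne_bot (EReal.coe_ne_bot _)] at h
      exact absurd h (by rw [← EReal.coe_add]; exact not_le.mpr (EReal.coe_lt_top _))
  · obtain ⟨s', hs'⟩ : ∃ s' : ℝ, ψ xhat' = (s' : EReal) :=
      ⟨(ψ xhat').toReal, (EReal.coe_toReal hT' (hψbot xhat')).symm⟩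
    have hT : ψ xhat ≠ ⊤ := by
      intro hT
      have h := hmin xhat'
      rw [hT, hs'] at h
      rw [EReal.add_top_of_ne_bot (EReal.coe_ne_bot _)] at h
      exact absurd h (by rw [← EReal.coe_add]; exact not_le.mpr (EReal.coe_lt_top _))
    obtain ⟨s, hs⟩ : ∃ s : ℝ, ψ xhat = (s : EReal) :=
      ⟨(ψ xhat).toReal, (EReal.coe_toReal hT (hψbot xhat)).symm⟩
    rw [hs, hs', ← EReal.coe_add, ← EReal.coe_add, ← EReal.coe_sub, EReal.coe_le_coe_iff]
    -- now a real inequality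
    have F1 := strong_conv_min ψ hψbot hψconv μ A' hμ zb' xhat xhat' hmin' s s' hs hs'
    have F2 := cross_id xhat' xhat zb zb'
    have F3 : 2 * ⟪xhat' - xhat, zb' - zb⟫ ≤ ‖xhat' - xhat‖^2 + ‖zb' - zb‖^2 := by
      nlinarith [sq_nonneg (‖(xhat' - xhat) - (zb' - zb)‖), norm_sub_sq_real (xhat' - xhat) (zb' - zb)]
    have e1 : ‖xhat' - xhat‖ = ‖xhat - xhat'‖ := norm_sub_rev _ _
    have e2 : ‖zb' - zb‖ = ‖zb - zb'‖ := norm_sub_rev _ _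
    rw [e1, e2] at F3
    nlinarith [F1, F2, F3, hμ.le]
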